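/- Let F be a field of odd characteristic where -1 is NOT a square, and let r1, r2 ∈ F be distinct and nonzero. Work over F[i]. Suppose u = (u1, u2, u3) ∈ F[i]^3 with u1 ≠ 0, and suppose there exist points a, a' ∈ F^3 (distinct) whose lines in C_{r1} both pass through u, and points b, b' ∈ F^3 (distinct) whose lines in C_{r2} both pass through u. Then writing α = u1⁻¹ - u1 and β = u1⁻¹ + u1, both β·r1 + (u3·u1⁻¹ - u2) ∈ F and β·r2 + (u3·u1⁻¹ - u2) ∈ F, and α ∈ F; derive a contradiction, i.e., such a configuration is impossible. -/

import Mathlib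

/-- Standard cross product on triples. -/
def cross3 {K : Type*} [Field K] (u v : K × K × K) : K × K × K :=
  (u.2.1 * v.2.2 - u.2.2 * v.2.1,
   u.2.2 * v.1 - u.1 * v.2.2,
   u.1 * v.2.1 - u.2.1 * v.1)

/-- The `ω`-part of the Plücker vector of the line of `(x,y,z)` in `C_r`. -/
def plOmega {K : Type*} [Field K] (i x y z r : K) : K × K × K :=
  (1, r - z, x - i * y)

/-- The `v`-part of the Plücker vector of the line of `(x,y,z)` in `C_r`. -/
def plV {K : Type*} [Field K] (i x y z r : K) : K × K × K :=
  (r ^ 2 - x ^ 2 - y ^ 2 - z ^ 2, -(r + z), x + i * y)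

/-- Impossibility of bichromatic concurrency (second part of Lemma 2.6): over
`F[i]` with `-1` not a square in `F`, and `r1 ≠ r2` nonzero, there is no point `u`
with `u1 ≠ 0` through which pass the lines of two distinct points of `F^3` in
`C_{r1}` and of two distinct points of `F^3` in `C_{r2}`. A line passes through `u`
iff its Plücker vector `(ω, v)` satisfies `v = u × ω`. -/
theorem stmt8 {F K : Type*} [Field F] [Field K] (h2 : (2 : F) ≠ 0)
    (hsq : ¬∃ s : F, s ^ 2 = -1)
    (f : F →+* K) (i : K) (hi : i ^ 2 = -1)
    (hK : ∀ z : K, ∃ a b : F, z = f a + f b * i)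
    (r1 r2 : F) (hr : r1 ≠ r2) (hr1 : r1 ≠ 0) (hr2 : r2 ≠ 0)
    (u : K × K × K) (hu1 : u.1 ≠ 0)
    (a a' b b' : F × F × F) (haa : a ≠ a') (hbb : b ≠ b')
    (ha : plV i (f a.1) (f a.2.1) (f a.2.2) (f r1) =
      cross3 u (plOmega i (f a.1) (f a.2.1) (f a.2.2) (f r1)))
    (ha' : plV i (f a'.1) (f a'.2.1) (f a'.2.2) (f r1) =
      cross3 u (plOmega i (f a'.1) (f a'.2.1) (f a'.2.2) (f r1)))
    (hb : plV i (f b.1) (f b.2.1) (f b.2.2) (f r2) =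
      cross3 u (plOmega i (f b.1) (f b.2.1) (f b.2.2) (f r2)))
    (hb' : plV i (f b'.1) (f b'.2.1) (f b'.2.2) (f r2) =
      cross3 u (plOmega i (f b'.1) (f b'.2.1) (f b'.2.2) (f r2))) :
    False := by
  classical
  have hinj : Function.Injective f := f.injective
  have h2K : (2 : K) ≠ 0 := by
    rw [(map_ofNat f 2).symm]
    intro h; exact h2 (hinj (by simpa using h))
  have hiK : ∀ s : F, f s ≠ i := by
    intro s h
    refine hsq ⟨s, hinj ?_⟩
    have : (f s) ^ 2 = -1 := by rw [h, hi]
    simpa using this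
  have key : ∀ c d : F, f c = f d * i → c = 0 ∧ d = 0 := by
    intro c d h
    by_cases hd : d = 0
    · subst hd
      simp only [map_zero, zero_mul] at h
      exact ⟨hinj (by simpa using h), rfl⟩
    · exfalso
      apply hiK (c / d)
      have hfd : f d ≠ 0 := fun h0 => hd (hinj (by simpa using h0))
      rw [map_div₀]; field_simp
      rw [h]
  simp only [plV, plOmega, cross3, Prod.ext_iff] at ha ha' hb
  obtain ⟨ha1, ha2, ha3⟩ := ha
  obtain ⟨ha1', ha2', ha3'⟩ := ha'
  obtain ⟨hb1, hb2, hb3⟩ := hb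
  set A : K := 1 - u.1 ^ 2 with hA_def
  set B : K := 1 + u.1 ^ 2 with hB_def
  set C : K := u.2.2 - u.1 * u.2.1 with hC_def
  set D : K := u.2.2 + u.1 * u.2.1 with hD_def
  have Ea : 2 * u.1 * f a.1 = A * f a.2.2 + B * f r1 + C := by
    linear_combination ha2 + u.1 * ha3
  have Ea' : 2 * u.1 * f a'.1 = A * f a'.2.2 + B * f r1 + C := by
    linear_combination ha2' + u.1 * ha3'
  have Eb : 2 * u.1 * f b.1 = A * f b.2.2 + B * f r2 + C := by
    linear_combination hb2 + u.1 * hb3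
  have Ga : 2 * u.1 * i * f a.2.1 = -(B * f a.2.2) - A * f r1 - D := by
    linear_combination (-1 : K) * ha2 + u.1 * ha3
  have Ga' : 2 * u.1 * i * f a'.2.1 = -(B * f a'.2.2) - A * f r1 - D := by
    linear_combination (-1 : K) * ha2' + u.1 * ha3'
  have Gb : 2 * u.1 * i * f b.2.1 = -(B * f b.2.2) - A * f r2 - D := by
    linear_combination (-1 : K) * hb2 + u.1 * hb3
  have hiNe : i ≠ 0 := by
    intro h; rw [h] at hi; simp at hi
  have hzF : a.2.2 - a'.2.2 ≠ 0 := by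
    intro h
    have hz : a.2.2 = a'.2.2 := sub_eq_zero.mp h
    apply haa
    have hx : f a.1 = f a'.1 := by
      have h2u : (2 : K) * u.1 ≠ 0 := mul_ne_zero h2K hu1
      have hE := Ea
      rw [hz] at hE
      exact mul_left_cancel₀ h2u (hE.trans Ea'.symm)
    have hy : f a.2.1 = f a'.2.1 := by
      have h2u : (2 : K) * u.1 * i ≠ 0 := mul_ne_zero (mul_ne_zero h2K hu1) hiNe
      have hG := Ga
      rw [hz] at hG
      exact mul_left_cancel₀ h2u (hG.trans Ga'.symm)
    exact Prod.ext_iff.mpr ⟨hinj hx, Prod.ext_iff.mpr ⟨hinj hy, hz⟩⟩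
  have hzK : f a.2.2 - f a'.2.2 ≠ 0 := by
    rw [← map_sub]; exact fun h => hzF (hinj (by simpa using h))
  set s : F := 2 * (a.1 - a'.1) / (a.2.2 - a'.2.2) with hs_def
  set t : F := -(2 * (a.2.1 - a'.2.1)) / (a.2.2 - a'.2.2) with ht_def
  have hsz : s * (a.2.2 - a'.2.2) = 2 * (a.1 - a'.1) := by
    rw [hs_def]; field_simp
  have htz : t * (a.2.2 - a'.2.2) = -(2 * (a.2.1 - a'.2.1)) := by
    rw [ht_def]; field_simp
  have hsK : f s * (f a.2.2 - f a'.2.2) = 2 * (f a.1 - f a'.1) := by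
    have h0 := congrArg f hsz
    simp only [map_mul, map_sub, map_ofNat] at h0
    exact h0
  have htK : f t * (f a.2.2 - f a'.2.2) = -(2 * (f a.2.1 - f a'.2.1)) := by
    have h0 := congrArg f htz
    simp only [map_mul, map_sub, map_neg, map_ofNat] at h0
    exact h0
  have hA : A = u.1 * f s := by
    apply mul_right_cancel₀ hzK
    linear_combination Ea' - Ea - u.1 * hsK
  have hB : B = u.1 * (i * f t) := by
    apply mul_right_cancel₀ hzK
    linear_combination Ga - Ga' - u.1 * i * htK
  have hrF : r1 - r2 ≠ 0 := sub_ne_zero.mpr hr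
  have h1 : f s * (f a.2.2 - f b.2.2) + i * f t * (f r1 - f r2)
      = 2 * (f a.1 - f b.1) := by
    apply mul_left_cancel₀ hu1
    rw [mul_comm u.1 (f s * (f a.2.2 - f b.2.2) + i * f t * (f r1 - f r2)),
      mul_comm u.1 (2 * (f a.1 - f b.1))]
    linear_combination Eb - Ea + (f b.2.2 - f a.2.2) * hA + (f r2 - f r1) * hB
  have hcd : f (2 * (a.1 - b.1) - s * (a.2.2 - b.2.2)) = f (t * (r1 - r2)) * i := by
    simp only [map_mul, map_sub, map_ofNat]
    linear_combination (-1 : K) * h1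
  have ht0 : t = 0 := by
    rcases mul_eq_zero.mp (key _ _ hcd).2 with h | h
    · exact h
    · exact absurd h hrF
  have hB0 : B = 0 := by
    rw [hB, ht0]; simp
  have h2' : f s * (f r1 - f r2) = -(2 * i * (f a.2.1 - f b.2.1)) := by
    apply mul_left_cancel₀ hu1
    rw [mul_comm u.1 (f s * (f r1 - f r2)),
      mul_comm u.1 (-(2 * i * (f a.2.1 - f b.2.1)))]
    linear_combination Ga - Gb + (f r2 - f r1) * hA + (f b.2.2 - f a.2.2) * hB0
  have hcd2 : f (-(s * (r1 - r2))) = f (2 * (a.2.1 - b.2.1)) * i := by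
    simp only [map_mul, map_sub, map_neg, map_ofNat]
    linear_combination (-1 : K) * h2'
  have hs0 : s = 0 := by
    have h := neg_eq_zero.mp (key _ _ hcd2).1
    rcases mul_eq_zero.mp h with h' | h'
    · exact h'
    · exact absurd h' hrF
  have hA0 : A = 0 := by rw [hA, hs0]; simp
  have hfin : (1 - u.1 ^ 2) + (1 + u.1 ^ 2) = 0 := by
    rw [← hA_def, ← hB_def, hA0, hB0]; ring
  exact h2K (by linear_combination hfin)
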